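/- Let 0 < p_0 < p_1 < 1. Then the function λ ↦ WR(λ) := W_λ(p_1)/W_λ(p_0) is strictly increasing on the interval [0, 1]; in particular, for every λ with 0 < λ ≤ 1, the complementary log ratio CLR = WR(0) = log(1 − p_1)/log(1 − p_0) satisfies CLR < WR(λ). -/

import Mathlib

/-- The Aranda-Ordaz transformation `W_λ(θ)`: equals `((1-θ)^(-λ) - 1)/λ` for `λ ≠ 0`
and `-log(1-θ)` for `λ = 0`. -/
noncomputable def arandaOrdaz (l θ : ℝ) : ℝ :=
  if l = 0 then -Real.log (1 - θ) else ((1 - θ) ^ (-l) - 1) / l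

/-- The transformation-based ratio `WR(λ) = W_λ(p₁)/W_λ(p₀)`. -/
noncomputable def WR (p₀ p₁ l : ℝ) : ℝ := arandaOrdaz l p₁ / arandaOrdaz l p₀

/-- `(e^x - 1)/x` is strictly increasing on `(0,∞)`. -/
lemma aux_expm1_div_mono : StrictMonoOn (fun x : ℝ => (Real.exp x - 1) / x) (Set.Ioi 0) := by
  apply strictMonoOn_of_deriv_pos (convex_Ioi 0)
  · exact ContinuousOn.div (by fun_prop) continuousOn_id
      (fun x hx => ne_of_gt (by exact hx))
  · intro x hx
    rw [interior_Ioi] at hx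
    have hx0 : (x : ℝ) ≠ 0 := ne_of_gt hx
    have hd : HasDerivAt (fun x : ℝ => (Real.exp x - 1) / x)
        ((Real.exp x * x - (Real.exp x - 1) * 1) / x ^ 2) x :=
      HasDerivAt.div ((Real.hasDerivAt_exp x).sub_const 1) (hasDerivAt_id x) hx0
    rw [hd.deriv]
    have key : 1 + (-x) < Real.exp (-x) := by
      have := Real.add_one_lt_exp (neg_ne_zero.mpr hx0)
      linarith
    have h1 : Real.exp (-x) = (Real.exp x)⁻¹ := Real.exp_neg x
    have hep : 0 < Real.exp x := Real.exp_pos x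
    have : Real.exp x - x * Real.exp x < 1 := by
      have := mul_lt_mul_of_pos_left key hep
      rw [h1, mul_inv_cancel₀ (ne_of_gt hep)] at this
      nlinarith
    have hnum : 0 < Real.exp x * x - (Real.exp x - 1) * 1 := by nlinarith
    positivity

/-- `(1 - e^{-x})/x` is strictly decreasing on `(0,∞)`. -/
lemma aux_one_sub_exp_neg_div_anti :
    StrictAntiOn (fun x : ℝ => (1 - Real.exp (-x)) / x) (Set.Ioi 0) := by
  apply strictAntiOn_of_deriv_neg (convex_Ioi 0)
  · exact ContinuousOn.div (by fun_prop) continuousOn_id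
      (fun x hx => ne_of_gt (by exact hx))
  · intro x hx
    rw [interior_Ioi] at hx
    have hx0 : (x : ℝ) ≠ 0 := ne_of_gt hx
    have hd : HasDerivAt (fun x : ℝ => (1 - Real.exp (-x)) / x)
        (((0 - Real.exp (-x) * -1) * x - (1 - Real.exp (-x)) * 1) / x ^ 2) x := by
      have h1 : HasDerivAt (fun x : ℝ => Real.exp (-x)) (Real.exp (-x) * -1) x :=
        (hasDerivAt_neg x).exp
      exact HasDerivAt.div ((hasDerivAt_const x 1).sub h1) (hasDerivAt_id x) hx0
    rw [hd.deriv]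
    have key : x + 1 < Real.exp x := Real.add_one_lt_exp hx0
    have h1 : Real.exp (-x) = (Real.exp x)⁻¹ := Real.exp_neg x
    have hep : 0 < Real.exp x := Real.exp_pos x
    have hxe : x * Real.exp (-x) + Real.exp (-x) < 1 := by
      have := mul_lt_mul_of_pos_left key (Real.exp_pos (-x))
      rw [h1] at this
      rw [h1]
      nlinarith [mul_inv_cancel₀ (ne_of_gt hep)]
    have hnum : (0 - Real.exp (-x) * -1) * x - (1 - Real.exp (-x)) * 1 < 0 := by nlinarith
    apply div_neg_of_neg_of_pos hnum (by positivity)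

/-- For `0 < x < y`: `y(e^x-1) < x(e^y-1)`. -/
lemma aux_B {x y : ℝ} (hx : 0 < x) (hxy : x < y) :
    y * (Real.exp x - 1) < x * (Real.exp y - 1) := by
  have hy : 0 < y := hx.trans hxy
  have := aux_expm1_div_mono hx (show y ∈ Set.Ioi (0:ℝ) from hy) hxy
  simp only at this
  rw [div_lt_div_iff₀ hx hy] at this
  linarith

/-- For `0 < x < y`: `x e^x (e^y - 1) < y e^y (e^x - 1)`. -/
lemma aux_A {x y : ℝ} (hx : 0 < x) (hxy : x < y) :
    x * Real.exp x * (Real.exp y - 1) < y * Real.exp y * (Real.exp x - 1) := by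
  have hy : 0 < y := hx.trans hxy
  have h := aux_one_sub_exp_neg_div_anti hx (show y ∈ Set.Ioi (0:ℝ) from hy) hxy
  simp only at h
  rw [div_lt_div_iff₀ hy hx] at h
  -- h : (1 - exp(-y)) * x < (1 - exp(-x)) * y
  have hmul := mul_lt_mul_of_pos_left h (mul_pos (Real.exp_pos x) (Real.exp_pos y))
  have e1' : Real.exp x * Real.exp y * ((1 - Real.exp (-y)) * x)
      = x * Real.exp x * (Real.exp y - 1) := by
    rw [Real.exp_neg]
    field_simp
  have e2' : Real.exp x * Real.exp y * ((1 - Real.exp (-x)) * y)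
      = y * Real.exp y * (Real.exp x - 1) := by
    rw [Real.exp_neg]
    field_simp
  rwa [e1', e2'] at hmul

/-- The core function `(e^{lb}-1)/(e^{la}-1)` is strictly monotone on `(0,∞)`. -/
lemma aux_F_mono {a b : ℝ} (ha : 0 < a) (hab : a < b) :
    StrictMonoOn (fun l : ℝ => (Real.exp (l * b) - 1) / (Real.exp (l * a) - 1)) (Set.Ioi 0) := by
  have hb : 0 < b := ha.trans hab
  have hden : ∀ l : ℝ, l ∈ Set.Ioi (0:ℝ) → Real.exp (l * a) - 1 ≠ 0 := by
    intro l hl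
    have : 1 < Real.exp (l * a) := Real.one_lt_exp_iff.mpr (mul_pos hl ha)
    linarith
  apply strictMonoOn_of_deriv_pos (convex_Ioi 0)
  · exact ContinuousOn.div (by fun_prop) (by fun_prop) hden
  · intro l hl
    rw [interior_Ioi] at hl
    have hl0 : (0:ℝ) < l := hl
    have hda : HasDerivAt (fun l : ℝ => Real.exp (l * a) - 1) (Real.exp (l * a) * a) l := by
      have := (((hasDerivAt_id l).mul_const a).exp).sub_const 1
      simpa using this
    have hdb : HasDerivAt (fun l : ℝ => Real.exp (l * b) - 1) (Real.exp (l * b) * b) l := by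
      have := (((hasDerivAt_id l).mul_const b).exp).sub_const 1
      simpa using this
    have hd := HasDerivAt.div hdb hda (hden l hl)
    rw [show (fun l : ℝ => (Real.exp (l * b) - 1) / (Real.exp (l * a) - 1)) = ((fun l : ℝ => Real.exp (l * b) - 1) / fun l : ℝ => Real.exp (l * a) - 1) from rfl, hd.deriv]
    have hposa : 0 < Real.exp (l * a) - 1 := by
      have : 1 < Real.exp (l * a) := Real.one_lt_exp_iff.mpr (mul_pos hl0 ha)
      linarith
    have key := aux_A (mul_pos hl0 ha) (by nlinarith : l * a < l * b)
    have hnum : 0 < Real.exp (l * b) * b * (Real.exp (l * a) - 1) -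
        (Real.exp (l * b) - 1) * (Real.exp (l * a) * a) := by nlinarith
    positivity

/-- For `0 < p₀ < p₁ < 1`, the function `λ ↦ WR(λ)` is strictly increasing on
`[0,1]`; in particular `CLR = WR(0) = log(1-p₁)/log(1-p₀) < WR(λ)` for every
`λ ∈ (0,1]`. -/
theorem WR_strictMonoOn (p₀ p₁ : ℝ) (h0 : 0 < p₀) (h01 : p₀ < p₁) (h1 : p₁ < 1) :
    StrictMonoOn (fun l => WR p₀ p₁ l) (Set.Icc (0 : ℝ) 1) ∧
    ∀ l : ℝ, 0 < l → l ≤ 1 →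
      Real.log (1 - p₁) / Real.log (1 - p₀) < WR p₀ p₁ l := by
  set a : ℝ := -Real.log (1 - p₀) with ha_def
  set b : ℝ := -Real.log (1 - p₁) with hb_def
  have hq0 : (0:ℝ) < 1 - p₀ := by linarith
  have hq1 : (0:ℝ) < 1 - p₁ := by linarith
  have ha : 0 < a := by
    have : Real.log (1 - p₀) < 0 := Real.log_neg hq0 (by linarith)
    simp only [ha_def]; linarith
  have hab : a < b := by
    have : Real.log (1 - p₁) < Real.log (1 - p₀) := Real.log_lt_log hq1 (by linarith)
    simp only [ha_def, hb_def]; linarith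
  have hb : 0 < b := ha.trans hab
  -- WR at positive l
  have hWR : ∀ l : ℝ, 0 < l →
      WR p₀ p₁ l = (Real.exp (l * b) - 1) / (Real.exp (l * a) - 1) := by
    intro l hl
    have hl0 : l ≠ 0 := ne_of_gt hl
    have hr : ∀ q : ℝ, 0 < q → (q : ℝ) ^ (-l) = Real.exp (l * (-Real.log q)) := by
      intro q hq
      rw [Real.rpow_def_of_pos hq]
      ring_nf
    unfold WR arandaOrdaz
    rw [if_neg hl0, if_neg hl0, hr _ hq1, hr _ hq0]
    rw [div_div_div_cancel_right₀]
    exact hl0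
  -- WR at 0
  have hWR0 : WR p₀ p₁ 0 = b / a := by
    unfold WR arandaOrdaz
    norm_num
    rw [ha_def, hb_def, neg_div_neg_eq]
  have hCLR : Real.log (1 - p₁) / Real.log (1 - p₀) = b / a := by
    simp only [ha_def, hb_def, neg_div_neg_eq]
  -- the key zero-case inequality
  have hzero : ∀ t : ℝ, 0 < t → b / a < (Real.exp (t * b) - 1) / (Real.exp (t * a) - 1) := by
    intro t ht
    have hkey := aux_B (mul_pos ht ha) (by nlinarith : t * a < t * b)
    have hposa : 0 < Real.exp (t * a) - 1 := by
      have : 1 < Real.exp (t * a) := Real.one_lt_exp_iff.mpr (mul_pos ht ha)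
      linarith
    rw [div_lt_div_iff₀ ha hposa]
    nlinarith
  have hmono : StrictMonoOn (fun l => WR p₀ p₁ l) (Set.Icc (0 : ℝ) 1) := by
    intro s hs t ht hst
    have ht0 : 0 < t := lt_of_le_of_lt hs.1 hst
    rcases eq_or_lt_of_le hs.1 with hs0 | hs0
    · simp only
      rw [← hs0, hWR0, hWR t ht0]
      exact hzero t ht0
    · simp only
      rw [hWR s hs0, hWR t ht0]
      exact aux_F_mono ha hab (show s ∈ Set.Ioi (0:ℝ) from hs0)
        (show t ∈ Set.Ioi (0:ℝ) from ht0) hst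
  refine ⟨hmono, fun l hl hl1 => ?_⟩
  rw [hCLR, hWR l hl]
  exact hzero l hl
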